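/- Let K ⊆ ℝ^k be a nonempty closed set, let f_0, f_1, …, f_p be real-valued Borel-measurable functions on K, let K_0, K_1, …, K_p be Borel-measurable subsets of K, and let b_1, …, b_p ∈ ℝ. Consider the problem of moments val := inf over Borel probability measures P supported on K satisfying ∫_{K_i} f_i dP = b_i for i = 1,…,p (with all f_i P-integrable) of ∫_{K_0} f_0 dP. If this infimum is attained by some feasible Borel probability measure, then it is attained by a probability measure that is a convex combination of at most p+2 Dirac point measures at points of K, i.e., P* = Σ_{j=1}^{p+2} w_j δ_{x_j} with w_j ≥ 0, Σ_j w_j = 1, x_j ∈ K, which is feasible and satisfies ∫_{K_0} f_0 dP* = val. -/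

import Mathlib

open MeasureTheory
open scoped NNReal ENNReal
open Filter

noncomputable section


private lemma nonempty_of_prob {α : Type*} [MeasurableSpace α] (μ : Measure α)
    [IsProbabilityMeasure μ] : Nonempty α := by
  by_contra h
  rw [not_nonempty_iff] at h
  have h1 : μ Set.univ = 1 := measure_univ
  rw [Set.univ_eq_empty_iff.2 h, measure_empty] at h1
  exact zero_ne_one h1

private lemma bary_reduce {α : Type*} [MeasurableSpace α] (μ : Measure α) [IsProbabilityMeasure μ]
    {E : Type} [NormedAddCommGroup E] [NormedSpace ℝ E] [FiniteDimensional ℝ E] {n : ℕ}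
    (IH : ∀ (E' : Type) [NormedAddCommGroup E'] [NormedSpace ℝ E'] [FiniteDimensional ℝ E'],
      Module.finrank ℝ E' ≤ n → ∀ (f : α → E') (s : Set E'), Integrable f μ → (∀ x, f x ∈ s) →
      (∫ x, f x ∂μ) ∈ convexHull ℝ s)
    (f : α → E) (s : Set E) (hfi : Integrable f μ) (hfs : ∀ x, f x ∈ s)
    (W : Submodule ℝ E) (hW : Module.finrank ℝ W ≤ n) (s₀ : E)
    (hsub : ∀ y ∈ s, y - s₀ ∈ W) : (∫ x, f x ∂μ) ∈ convexHull ℝ s := by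
  have hfi' : Integrable (fun x => f x - s₀) μ := hfi.sub (integrable_const s₀)
  set g : α → W := fun x => ⟨f x - s₀, hsub _ (hfs x)⟩ with hg
  have hgi : Integrable g μ := by
    constructor
    · exact (Topology.IsEmbedding.subtypeVal.aestronglyMeasurable_comp_iff).mp
        hfi'.aestronglyMeasurable
    · have := hfi'.hasFiniteIntegral
      simpa [hasFiniteIntegral_iff_norm] using this
  have hgint : ((∫ x, g x ∂μ : W) : E) = (∫ x, f x ∂μ) - s₀ := by
    calc ((∫ x, g x ∂μ : W) : E) = ∫ x, (f x - s₀) ∂μ := by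
          simpa using (W.subtypeL.integral_comp_comm hgi).symm
      _ = (∫ x, f x ∂μ) - s₀ := by
          rw [integral_sub hfi (integrable_const s₀), integral_const, probReal_univ]; simp
  set s' : Set W := {y : W | (y : E) + s₀ ∈ s} with hs'
  have hmem := IH W hW g s' hgi (fun x => by simpa [hs', hg] using hfs x)
  let T : W →ᵃ[ℝ] E :=
    ⟨fun y => (y : E) + s₀, W.subtype, fun p v => by simp [add_assoc]⟩
  have hTv : (∫ x, f x ∂μ) = T (∫ x, g x ∂μ) := by
    show _ = ((∫ x, g x ∂μ : W) : E) + s₀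
    rw [hgint]; abel
  rw [hTv]
  have himg : T '' (convexHull ℝ s') ⊆ convexHull ℝ s := by
    rw [AffineMap.image_convexHull]
    refine convexHull_mono ?_
    rintro _ ⟨y, hy, rfl⟩
    exact hy
  exact himg ⟨_, hmem, rfl⟩

private theorem bary_aux {α : Type*} [MeasurableSpace α] (μ : Measure α) [IsProbabilityMeasure μ] :
    ∀ (n : ℕ) (E : Type) [NormedAddCommGroup E] [NormedSpace ℝ E] [FiniteDimensional ℝ E],
      Module.finrank ℝ E ≤ n → ∀ (f : α → E) (s : Set E), Integrable f μ → (∀ x, f x ∈ s) →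
      (∫ x, f x ∂μ) ∈ convexHull ℝ s := by
  intro n
  induction n with
  | zero =>
    intro E _ _ _ hE f s hfi hfs
    have hsub : Subsingleton E := by
      rw [← Module.finrank_zero_iff (R := ℝ)]
      omega
    obtain ⟨x₀⟩ := nonempty_of_prob μ
    have h : (∫ x, f x ∂μ) = f x₀ := Subsingleton.elim _ _
    rw [h]; exact subset_convexHull ℝ s (hfs x₀)
  | succ n IH =>
    intro E _ _ _ hE f s hfi hfs
    by_cases hn : Module.finrank ℝ E ≤ n
    · exact IH E hn f s hfi hfs
    have hEn : Module.finrank ℝ E = n + 1 := le_antisymm hE (not_le.1 hn)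
    obtain ⟨x₀⟩ := nonempty_of_prob μ
    have hsne : s.Nonempty := ⟨f x₀, hfs x₀⟩
    by_cases hspan : affineSpan ℝ s = ⊤
    · set C := convexHull ℝ s with hC_def
      have hC : Convex ℝ C := convex_convexHull ℝ s
      have hint_ne : (interior C).Nonempty := by
        rw [hC.interior_nonempty_iff_affineSpan_eq_top, hC_def, affineSpan_convexHull]
        exact hspan
      obtain ⟨a₀, ha₀⟩ := hint_ne
      set bb := ∫ x, f x ∂μ with hbb
      by_cases hb : bb ∈ interior C
      · exact interior_subset hb
      obtain ⟨ℓ, hℓ⟩ := geometric_hahn_banach_open_point hC.interior isOpen_interior hb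
      have hCle : ∀ y ∈ C, ℓ y ≤ ℓ bb := by
        intro y hy
        set t : ℕ → ℝ := fun m => 1 / (m + 1) with ht
        have ht0 : ∀ m : ℕ, 0 < t m := fun m => by positivity
        have ht1 : ∀ m : ℕ, t m ≤ 1 := fun m => by
          rw [ht]
          simp only []
          rw [div_le_one (by positivity)]
          linarith [Nat.cast_nonneg (α := ℝ) m]
        have hseq : ∀ m : ℕ, ℓ (t m • a₀ + (1 - t m) • y) < ℓ bb := fun m =>
          hℓ _ (hC.combo_interior_closure_mem_interior ha₀ (subset_closure hy) (ht0 m)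
            (by linarith [ht1 m]) (by ring))
        have htt : Tendsto t atTop (nhds 0) := tendsto_one_div_add_atTop_nhds_zero_nat
        have hc : Continuous (fun r : ℝ => ℓ (r • a₀ + (1 - r) • y)) := by fun_prop
        have htend := (hc.tendsto 0).comp htt
        simp only [Function.comp_def, zero_smul, sub_zero, one_smul, zero_add] at htend
        exact le_of_tendsto htend (Eventually.of_forall fun m => (hseq m).le)
      have hle : ∀ x, ℓ (f x) ≤ ℓ bb := fun x => hCle _ (subset_convexHull ℝ s (hfs x))
      have hcomp : Integrable (fun x => ℓ bb - ℓ (f x)) μ :=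
        (integrable_const _).sub (ℓ.integrable_comp hfi)
      have hintz : ∫ x, (ℓ bb - ℓ (f x)) ∂μ = 0 := by
        rw [integral_sub (integrable_const _) (ℓ.integrable_comp hfi), integral_const,
          probReal_univ, ContinuousLinearMap.integral_comp_comm ℓ hfi]
        simp [hbb]
      have hae : ∀ᵐ x ∂μ, ℓ bb - ℓ (f x) = 0 := by
        have := (integral_eq_zero_iff_of_nonneg_ae
          (Eventually.of_forall fun x => sub_nonneg.2 (hle x)) hcomp).1 hintz
        filter_upwards [this] with x hx using hx
      haveI : (ae μ).NeBot := ae_neBot.2 (NeZero.ne μ)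
      obtain ⟨x₁, hx₁⟩ : ∃ x, ℓ (f x) = ℓ bb := by
        obtain ⟨x, hx⟩ := hae.exists
        exact ⟨x, by linarith [hx, sub_eq_zero.1 hx]⟩
      classical
      set f' : α → E := fun x => if ℓ (f x) = ℓ bb then f x else f x₁ with hf'
      have hff' : f =ᵐ[μ] f' := by
        filter_upwards [hae] with x hx
        have : ℓ (f x) = ℓ bb := by linarith
        simp [hf', this]
      have hfi2 : Integrable f' μ := hfi.congr hff'
      have hint' : (∫ x, f' x ∂μ) = bb := by rw [← integral_congr_ae hff']
      set s2 : Set E := {y ∈ s | ℓ y = ℓ bb} with hs2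
      have hfs2 : ∀ x, f' x ∈ s2 := by
        intro x
        by_cases h : ℓ (f x) = ℓ bb
        · simp only [hf', if_pos h]; exact ⟨hfs x, h⟩
        · simp only [hf', if_neg h]; exact ⟨hfs x₁, hx₁⟩
      have hl0 : (ℓ : E →L[ℝ] ℝ) ≠ 0 := by
        intro h
        have := hℓ a₀ ha₀
        rw [h] at this
        simp at this
      set W : Submodule ℝ E := LinearMap.ker (ℓ : E →ₗ[ℝ] ℝ) with hWdef
      have hWne : W ≠ ⊤ := by
        intro h
        apply hl0
        ext v
        have : v ∈ W := h ▸ Submodule.mem_top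
        simpa [hWdef, LinearMap.mem_ker] using this
      have hW : Module.finrank ℝ W ≤ n := by
        have := Submodule.finrank_lt (K := ℝ) (V := E) hWne
        omega
      have hres := bary_reduce μ (fun E' _ _ _ h => IH E' h) f' s2 hfi2 hfs2 W hW (f x₁)
        (fun y hy => by
          simp only [hWdef, LinearMap.mem_ker, map_sub]
          have h1 : ℓ y = ℓ bb := hy.2
          simp only [ContinuousLinearMap.coe_coe]
          rw [h1, hx₁, sub_self])
      rw [hint'] at hres
      exact convexHull_mono (Set.sep_subset _ _) hres
    · obtain ⟨s₀, hs₀⟩ := hsne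
      set W := (affineSpan ℝ s).direction with hWdef
      have hWne : W ≠ ⊤ := by
        intro h
        exact hspan ((AffineSubspace.direction_eq_top_iff_of_nonempty
          ⟨s₀, subset_affineSpan ℝ s hs₀⟩).1 h)
      have hW : Module.finrank ℝ W ≤ n := by
        have := Submodule.finrank_lt (K := ℝ) (V := E) hWne
        omega
      exact bary_reduce μ (fun E' _ _ _ h => IH E' h) f s hfi hfs W hW s₀
        (fun y hy => AffineSubspace.vsub_mem_direction (subset_affineSpan ℝ s hy)
          (subset_affineSpan ℝ s hs₀))

theorem integral_mem_convexHull' {α : Type*} [MeasurableSpace α] (μ : Measure α)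
    [IsProbabilityMeasure μ] {E : Type} [NormedAddCommGroup E] [NormedSpace ℝ E]
    [FiniteDimensional ℝ E] (f : α → E) (s : Set E) (hfi : Integrable f μ)
    (hfs : ∀ᵐ x ∂μ, f x ∈ s) : (∫ x, f x ∂μ) ∈ convexHull ℝ s := by
  classical
  haveI : (ae μ).NeBot := ae_neBot.2 (NeZero.ne μ)
  obtain ⟨x₁, hx₁⟩ := hfs.exists
  set f' : α → E := fun x => if f x ∈ s then f x else f x₁ with hf'
  have hff' : f =ᵐ[μ] f' := by filter_upwards [hfs] with x hx; simp [hf', hx]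
  have := bary_aux μ (Module.finrank ℝ E) E le_rfl f' s (hfi.congr hff')
    (fun x => by by_cases h : f x ∈ s <;> simp [hf', h, hx₁])
  rwa [← integral_congr_ae hff'] at this

private lemma pad_sum {M : Type*} [AddCommMonoid M] {m N : ℕ} (hmN : m ≤ N) (A : Fin m → M) :
    (∑ j : Fin N, if h : (j : ℕ) < m then A ⟨j, h⟩ else 0) = ∑ i : Fin m, A i := by
  rw [Fin.sum_univ_eq_sum_range (fun j => if h : j < m then A ⟨j, h⟩ else 0) N]
  rw [← Finset.sum_subset (Finset.range_subset_range.2 hmN)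
    (fun i _ hi => dif_neg (by simpa using hi))]
  rw [← Fin.sum_univ_eq_sum_range (fun j => if h : j < m then A ⟨j, h⟩ else 0) m]
  exact Finset.sum_congr rfl fun i _ => by rw [dif_pos i.isLt]

/-- if the generalized problem of moments is attained by some feasible Borel
probability measure, then it is attained by a convex combination of at most `p+2` Dirac
measures at points of `K`. -/
theorem moment_problem_attained_by_atomic
    {k : ℕ} (p : ℕ) (K : Set (Fin k → ℝ)) (hKcl : IsClosed K) (hKne : K.Nonempty)
    (f0 : (Fin k → ℝ) → ℝ) (f : Fin p → (Fin k → ℝ) → ℝ)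
    (hmeas0 : Measurable f0) (hmeas : ∀ i, Measurable (f i))
    (K0 : Set (Fin k → ℝ)) (Ks : Fin p → Set (Fin k → ℝ))
    (hK0 : MeasurableSet K0 ∧ K0 ⊆ K) (hKs : ∀ i, MeasurableSet (Ks i) ∧ Ks i ⊆ K)
    (b : Fin p → ℝ)
    (Feas : Measure (Fin k → ℝ) → Prop)
    (hFeas : ∀ P : Measure (Fin k → ℝ), Feas P ↔ IsProbabilityMeasure P ∧ P Kᶜ = 0 ∧
      IntegrableOn f0 K0 P ∧ (∀ i, IntegrableOn (f i) (Ks i) P) ∧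
      (∀ i, (∫ z in Ks i, f i z ∂P) = b i))
    (val : ℝ)
    (hval : val = sInf {v : ℝ | ∃ P, Feas P ∧ v = ∫ z in K0, f0 z ∂P})
    (hatt : ∃ P, Feas P ∧ (∫ z in K0, f0 z ∂P) = val) :
    ∃ (w : Fin (p + 2) → ℝ≥0) (x : Fin (p + 2) → Fin k → ℝ),
      (∀ j, x j ∈ K) ∧ (∑ j, (w j : ℝ)) = 1 ∧
      Feas (∑ j, (w j : ℝ≥0∞) • Measure.dirac (x j)) ∧
      (∫ z in K0, f0 z ∂(∑ j, (w j : ℝ≥0∞) • Measure.dirac (x j))) = val := by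
  classical
  obtain ⟨P, hPfeas, hPval⟩ := hatt
  rw [hFeas] at hPfeas
  obtain ⟨hPprob, hPK, hI0, hIs, hbs⟩ := hPfeas
  haveI := hPprob
  set φ : (Fin k → ℝ) → (Fin (p + 1) → ℝ) :=
    fun z => Fin.cons (K0.indicator f0 z) (fun i => (Ks i).indicator (f i) z) with hφ
  have hφ0 : ∀ z, φ z 0 = K0.indicator f0 z := fun z => rfl
  have hφs : ∀ (i : Fin p) (z : Fin k → ℝ), φ z i.succ = (Ks i).indicator (f i) z :=
    fun i z => rfl
  have hind0 : Integrable (K0.indicator f0) P := (integrable_indicator_iff hK0.1).2 hI0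
  have hinds : ∀ i, Integrable ((Ks i).indicator (f i)) P :=
    fun i => (integrable_indicator_iff (hKs i).1).2 (hIs i)
  have hφmeas : Measurable φ := by
    rw [measurable_pi_iff]
    intro j
    refine Fin.cases ?_ ?_ j
    · exact hmeas0.indicator hK0.1
    · intro i; exact (hmeas i).indicator (hKs i).1
  have hφint : Integrable φ P := by
    have hG : Integrable (fun z => ‖K0.indicator f0 z‖ + ∑ i, ‖(Ks i).indicator (f i) z‖) P :=
      hind0.norm.add (integrable_finset_sum _ fun i _ => (hinds i).norm)
    refine hG.mono' hφmeas.aestronglyMeasurable (Filter.Eventually.of_forall fun z => ?_)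
    rw [pi_norm_le_iff_of_nonneg (by positivity)]
    intro j
    refine Fin.cases ?_ ?_ j
    · rw [hφ0]
      have h1 : (0:ℝ) ≤ ∑ i, ‖(Ks i).indicator (f i) z‖ := by positivity
      simp only [Real.norm_eq_abs] at *
      linarith
    · intro i
      rw [hφs]
      have h1 : ‖(Ks i).indicator (f i) z‖ ≤ ∑ i', ‖(Ks i').indicator (f i') z‖ :=
        Finset.single_le_sum (f := fun i' : Fin p => ‖(Ks i').indicator (f i') z‖)
          (fun _ _ => norm_nonneg _) (Finset.mem_univ i)
      have h2 : (0:ℝ) ≤ ‖K0.indicator f0 z‖ := norm_nonneg _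
      linarith
  set v : Fin (p + 1) → ℝ := ∫ z, φ z ∂P with hv
  have hproj : ∀ j : Fin (p + 1), v j = ∫ z, φ z j ∂P := by
    intro j
    have := (ContinuousLinearMap.proj (R := ℝ) (φ := fun _ : Fin (p + 1) => ℝ)
      j).integral_comp_comm hφint
    simpa [hv] using this.symm
  have hv0 : v 0 = val := by
    rw [hproj 0]
    have : (∫ z, φ z 0 ∂P) = ∫ z, K0.indicator f0 z ∂P := rfl
    rw [this, integral_indicator hK0.1]
    exact hPval
  have hvs : ∀ i : Fin p, v i.succ = b i := by
    intro i
    rw [hproj i.succ]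
    have : (∫ z, φ z i.succ ∂P) = ∫ z, (Ks i).indicator (f i) z ∂P := rfl
    rw [this, integral_indicator (hKs i).1]
    exact hbs i
  have haeK : ∀ᵐ z ∂P, z ∈ K := by
    rw [ae_iff]
    simpa [Set.compl_def] using hPK
  have hmem : v ∈ convexHull ℝ (φ '' K) :=
    integral_mem_convexHull' P φ (φ '' K) hφint
      (haeK.mono fun z hz => Set.mem_image_of_mem φ hz)
  obtain ⟨ι, hft, z, w, hrange, haff, hwpos, hwsum, hwz⟩ :=
    eq_pos_convex_span_of_mem_convexHull hmem
  letI := hft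
  have hcard : Fintype.card ι ≤ p + 2 := by
    have h1 := haff.card_le_finrank_succ
    have h2 : Module.finrank ℝ (vectorSpan ℝ (Set.range z)) ≤
        Module.finrank ℝ (Fin (p + 1) → ℝ) := Submodule.finrank_le _
    have h3 : Module.finrank ℝ (Fin (p + 1) → ℝ) = p + 1 := Module.finrank_fin_fun ℝ
    omega
  have hpre : ∀ i : ι, ∃ x, x ∈ K ∧ φ x = z i := by
    intro i
    obtain ⟨x, hx, hxz⟩ := hrange (Set.mem_range_self i)
    exact ⟨x, hx, hxz⟩
  choose ξ hξK hξφ using hpre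
  set m := Fintype.card ι with hm
  set e := Fintype.equivFin ι with he
  obtain ⟨xbar, hxbar⟩ := hKne
  set W : Fin (p + 2) → ℝ≥0 :=
    fun j => if h : (j : ℕ) < m then ⟨w (e.symm ⟨j, h⟩), (hwpos _).le⟩ else 0 with hWdef
  set X : Fin (p + 2) → (Fin k → ℝ) :=
    fun j => if h : (j : ℕ) < m then ξ (e.symm ⟨j, h⟩) else xbar with hXdef
  have hWc : ∀ (j : Fin (p + 2)) (h : (j : ℕ) < m), (W j : ℝ) = w (e.symm ⟨j, h⟩) :=
    fun j h => by simp only [hWdef]; exact congrArg NNReal.toReal (dif_pos h)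
  have hW0 : ∀ j : Fin (p + 2), ¬(j : ℕ) < m → W j = 0 :=
    fun j h => by simp only [hWdef]; exact dif_neg h
  have hXc : ∀ (j : Fin (p + 2)) (h : (j : ℕ) < m), X j = ξ (e.symm ⟨j, h⟩) :=
    fun j h => by simp [hXdef, dif_pos h]
  have hX0 : ∀ j : Fin (p + 2), ¬(j : ℕ) < m → X j = xbar :=
    fun j h => by simp [hXdef, dif_neg h]
  have hXK : ∀ j, X j ∈ K := by
    intro j
    by_cases h : (j : ℕ) < m
    · rw [hXc j h]; exact hξK _
    · rw [hX0 j h]; exact hxbar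
  have hsum_w : (∑ j, (W j : ℝ)) = 1 := by
    have h1 : (∑ j : Fin (p + 2), (W j : ℝ))
        = ∑ j : Fin (p + 2), (if h : (j : ℕ) < m then w (e.symm ⟨j, h⟩) else 0) := by
      refine Finset.sum_congr rfl fun j _ => ?_
      by_cases h : (j : ℕ) < m
      · rw [hWc j h, dif_pos h]
      · rw [hW0 j h, dif_neg h]; simp
    rw [h1, pad_sum hcard (fun i : Fin m => w (e.symm i)), Equiv.sum_comp e.symm w]
    exact hwsum
  have hcomb : (∑ j : Fin (p + 2), (W j : ℝ) • φ (X j)) = v := by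
    have h1 : (∑ j : Fin (p + 2), (W j : ℝ) • φ (X j))
        = ∑ j : Fin (p + 2),
          (if h : (j : ℕ) < m then w (e.symm ⟨j, h⟩) • z (e.symm ⟨j, h⟩) else 0) := by
      refine Finset.sum_congr rfl fun j _ => ?_
      by_cases h : (j : ℕ) < m
      · rw [hWc j h, hXc j h, hξφ, dif_pos h]
      · rw [hW0 j h, dif_neg h]; simp
    rw [h1, pad_sum hcard (fun i : Fin m => w (e.symm i) • z (e.symm i)),
      Equiv.sum_comp e.symm (fun i => w i • z i)]
    exact hwz
  -- integration facts for the atomic measure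
  have hdint : ∀ (g : (Fin k → ℝ) → ℝ) (x : Fin k → ℝ), Integrable g (Measure.dirac x) := by
    intro g x
    have hae : g =ᵐ[Measure.dirac x] fun _ => g x := by
      rw [ae_dirac_eq]; exact Filter.eventually_pure.2 rfl
    exact (integrable_const (g x)).congr hae.symm
  have hQint : ∀ g : (Fin k → ℝ) → ℝ,
      Integrable g (∑ j, (W j : ℝ≥0∞) • Measure.dirac (X j)) := by
    intro g
    rw [integrable_finset_sum_measure]
    intro j _
    exact (hdint g (X j)).smul_measure ENNReal.coe_ne_top
  have hQeval : ∀ g : (Fin k → ℝ) → ℝ,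
      (∫ z', g z' ∂(∑ j, (W j : ℝ≥0∞) • Measure.dirac (X j)))
        = ∑ j, (W j : ℝ) * g (X j) := by
    intro g
    rw [integral_finset_sum_measure
      (fun j _ => (hdint g (X j)).smul_measure ENNReal.coe_ne_top)]
    refine Finset.sum_congr rfl fun j _ => ?_
    rw [integral_smul_measure, integral_dirac]
    simp [smul_eq_mul]
  have hsum_w' : (∑ j, W j : ℝ≥0) = 1 := by
    apply NNReal.coe_injective
    push_cast
    simpa using hsum_w
  have hQprob : IsProbabilityMeasure (∑ j, (W j : ℝ≥0∞) • Measure.dirac (X j)) := by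
    constructor
    rw [Measure.finset_sum_apply]
    have h1 : ∀ j ∈ Finset.univ, ((W j : ℝ≥0∞) • Measure.dirac (X j)) Set.univ
        = (W j : ℝ≥0∞) := by
      intro j _
      simp [Measure.smul_apply]
    rw [Finset.sum_congr rfl h1, ← ENNReal.coe_finset_sum, hsum_w']
    simp
  have hQK : (∑ j, (W j : ℝ≥0∞) • Measure.dirac (X j)) Kᶜ = 0 := by
    rw [Measure.finset_sum_apply]
    refine Finset.sum_eq_zero fun j _ => ?_
    rw [Measure.smul_apply, Measure.dirac_apply' _ hKcl.measurableSet.compl]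
    simp [Set.indicator_of_notMem, hXK j]
  have hcoord : ∀ j : Fin (p + 1),
      (∑ j' : Fin (p + 2), (W j' : ℝ) * φ (X j') j) = v j := by
    intro j
    have hc := congrFun hcomb j
    simpa [Finset.sum_apply, Pi.smul_apply, smul_eq_mul] using hc
  have hQ0 : (∫ z' in K0, f0 z' ∂(∑ j, (W j : ℝ≥0∞) • Measure.dirac (X j))) = val := by
    rw [← integral_indicator hK0.1, hQeval (K0.indicator f0)]
    have := hcoord 0
    simp only [hφ0] at this
    rw [this, hv0]
  have hQs : ∀ i : Fin p,
      (∫ z' in Ks i, f i z' ∂(∑ j, (W j : ℝ≥0∞) • Measure.dirac (X j))) = b i := by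
    intro i
    rw [← integral_indicator (hKs i).1, hQeval ((Ks i).indicator (f i))]
    have := hcoord i.succ
    simp only [hφs] at this
    rw [this, hvs]
  refine ⟨W, X, hXK, hsum_w, ?_, hQ0⟩
  rw [hFeas]
  exact ⟨hQprob, hQK,
    (integrable_indicator_iff hK0.1).1 (hQint _),
    fun i => (integrable_indicator_iff (hKs i).1).1 (hQint _),
    hQs⟩
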